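/- Discrete uniform Gronwall lemma: Let $\Delta t > 0$, let $n_0, n_1$ be positive integers, and let $(\xi_n)$, $(\eta_n)$, $(\zeta_n)$ be positive sequences such that $\Delta t\,\eta_{n+1} < 1/2$ for all $n \ge n_0$ and $(1-\Delta t\,\eta_{n+1})\,\xi_{n+1} \le \xi_n + \Delta t\,\zeta_{n+1}$ for all $n \ge n_0$. Assume there are constants $a_1, a_2, a_3$ such that for every $n_2 \ge n_0$: $\Delta t \sum_{n=n_2}^{n_2+n_1+1} \eta_n \le a_1$, $\Delta t \sum_{n=n_2}^{n_2+n_1+1} \zeta_n \le a_2$, and $\Delta t \sum_{n=n_2}^{n_2+n_1+1} \xi_n \le a_3$. Then $\xi_{n+1} \le \left(\frac{a_3}{\Delta t\, n_1} + a_2\right) e^{4a_1}$ for all $n > n_0 + n_1$. -/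

import Mathlib

lemma dug_key {a : ℝ} (ha : 0 ≤ a) (ha2 : a ≤ 1/2) : 1 ≤ (1 - a) * Real.exp (2*a) := by
  have h1 : 1 + 2*a ≤ Real.exp (2*a) := by
    have := Real.add_one_le_exp (2*a); linarith
  nlinarith [Real.exp_pos (2*a)]

lemma dug_iterate (dt : ℝ) (hdt : 0 < dt) (n0 : ℕ)
    (ξ η ζ : ℕ → ℝ)
    (hξ : ∀ n, 0 < ξ n) (hη : ∀ n, 0 < η n) (hζ : ∀ n, 0 < ζ n)
    (hsmall : ∀ n ≥ n0, dt * η (n + 1) < 1 / 2)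
    (hrec : ∀ n ≥ n0, (1 - dt * η (n + 1)) * ξ (n + 1) ≤ ξ n + dt * ζ (n + 1))
    (m : ℕ) (hm : n0 ≤ m) : ∀ j : ℕ,
    ξ (m + j) ≤ (ξ m + dt * ∑ k ∈ Finset.Icc (m+1) (m+j), ζ k) *
      Real.exp (2 * (dt * ∑ k ∈ Finset.Icc (m+1) (m+j), η k)) := by
  intro j
  induction j with
  | zero =>
    have he : Finset.Icc (m+1) (m+0) = ∅ := by
      apply Finset.Icc_eq_empty; omega
    rw [he]; simp
  | succ j IH =>
    have hle : m + 1 ≤ m + j + 1 := by omega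
    have hsζ : ∑ k ∈ Finset.Icc (m+1) (m + (j+1)), ζ k
        = (∑ k ∈ Finset.Icc (m+1) (m+j), ζ k) + ζ (m+j+1) := by
      have := Finset.sum_Icc_succ_top hle ζ
      exact this
    have hsη : ∑ k ∈ Finset.Icc (m+1) (m + (j+1)), η k
        = (∑ k ∈ Finset.Icc (m+1) (m+j), η k) + η (m+j+1) := by
      have := Finset.sum_Icc_succ_top hle η
      exact this
    set S := ∑ k ∈ Finset.Icc (m+1) (m+j), ζ k with hS
    set H := ∑ k ∈ Finset.Icc (m+1) (m+j), η k with hH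
    set a := dt * η (m+j+1) with ha
    have hapos : 0 ≤ a := le_of_lt (mul_pos hdt (hη _))
    have hasmall : a ≤ 1/2 := le_of_lt (hsmall (m+j) (by omega))
    have hkey : 1 ≤ (1 - a) * Real.exp (2*a) := dug_key hapos hasmall
    have hr : (1 - a) * ξ (m+j+1) ≤ ξ (m+j) + dt * ζ (m+j+1) := hrec (m+j) (by omega)
    have hE1 : 1 ≤ Real.exp (2 * (dt * H)) := by
      apply Real.one_le_exp
      have : 0 ≤ H := Finset.sum_nonneg fun k _ => (hη k).le
      positivity
    have hepos : (0:ℝ) < Real.exp (2*a) := Real.exp_pos _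
    have hgoal : ξ (m+j+1) ≤ (ξ m + (dt * S + dt * ζ (m+j+1))) *
        (Real.exp (2 * (dt * H)) * Real.exp (2*a)) := by
      calc ξ (m+j+1) = ξ (m+j+1) * 1 := (mul_one _).symm
        _ ≤ ξ (m+j+1) * ((1 - a) * Real.exp (2*a)) :=
            mul_le_mul_of_nonneg_left hkey (hξ _).le
        _ = ((1 - a) * ξ (m+j+1)) * Real.exp (2*a) := by ring
        _ ≤ (ξ (m+j) + dt * ζ (m+j+1)) * Real.exp (2*a) :=
            mul_le_mul_of_nonneg_right hr hepos.le
        _ ≤ ((ξ m + dt * S) * Real.exp (2 * (dt * H)) + dt * ζ (m+j+1)) * Real.exp (2*a) := by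
            apply mul_le_mul_of_nonneg_right _ hepos.le
            exact add_le_add IH le_rfl
        _ ≤ ((ξ m + dt * S) * Real.exp (2 * (dt * H))
              + dt * ζ (m+j+1) * Real.exp (2 * (dt * H))) * Real.exp (2*a) := by
            apply mul_le_mul_of_nonneg_right _ hepos.le
            have h0 : 0 ≤ dt * ζ (m+j+1) := le_of_lt (mul_pos hdt (hζ _))
            nlinarith
        _ = (ξ m + (dt * S + dt * ζ (m+j+1))) *
            (Real.exp (2 * (dt * H)) * Real.exp (2*a)) := by ring
    rw [hsζ, hsη]
    rw [show m + (j+1) = m + j + 1 from rfl] at *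
    calc ξ (m+j+1) ≤ _ := hgoal
      _ = (ξ m + dt * (S + ζ (m+j+1))) * Real.exp (2 * (dt * (H + η (m+j+1)))) := by
          rw [← Real.exp_add, ha]; ring_nf
    
theorem discrete_uniform_gronwall (dt : ℝ) (hdt : 0 < dt)
    (n0 n1 : ℕ) (hn0 : 0 < n0) (hn1 : 0 < n1)
    (ξ η ζ : ℕ → ℝ)
    (hξ : ∀ n, 0 < ξ n) (hη : ∀ n, 0 < η n) (hζ : ∀ n, 0 < ζ n)
    (hsmall : ∀ n ≥ n0, dt * η (n + 1) < 1 / 2)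
    (hrec : ∀ n ≥ n0, (1 - dt * η (n + 1)) * ξ (n + 1) ≤ ξ n + dt * ζ (n + 1))
    (a1 a2 a3 : ℝ)
    (ha1 : ∀ n2 ≥ n0, dt * ∑ n ∈ Finset.Icc n2 (n2 + n1 + 1), η n ≤ a1)
    (ha2 : ∀ n2 ≥ n0, dt * ∑ n ∈ Finset.Icc n2 (n2 + n1 + 1), ζ n ≤ a2)
    (ha3 : ∀ n2 ≥ n0, dt * ∑ n ∈ Finset.Icc n2 (n2 + n1 + 1), ξ n ≤ a3) :
    ∀ n > n0 + n1, ξ (n + 1) ≤ (a3 / (dt * n1) + a2) * Real.exp (4 * a1) := by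
  intro n hn
  set n2 := n - n1 with hn2def
  have hn2 : n = n2 + n1 := by omega
  have hn2n0 : n0 ≤ n2 := by omega
  -- positivity of a1, a2, a3
  have hwne : (Finset.Icc n2 (n2 + n1 + 1)).Nonempty := by
    refine ⟨n2, ?_⟩; simp; omega
  have ha1pos : 0 < a1 := lt_of_lt_of_le
    (mul_pos hdt (Finset.sum_pos (fun k _ => hη k) hwne)) (ha1 n2 hn2n0)
  have ha2pos : 0 < a2 := lt_of_lt_of_le
    (mul_pos hdt (Finset.sum_pos (fun k _ => hζ k) hwne)) (ha2 n2 hn2n0)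
  have ha3pos : 0 < a3 := lt_of_lt_of_le
    (mul_pos hdt (Finset.sum_pos (fun k _ => hξ k) hwne)) (ha3 n2 hn2n0)
  -- find m in [n2, n2+n1] with ξ m small
  have hsub : Finset.Icc n2 (n2 + n1) ⊆ Finset.Icc n2 (n2 + n1 + 1) :=
    Finset.Icc_subset_Icc le_rfl (by omega)
  have hsum : ∑ k ∈ Finset.Icc n2 (n2 + n1), ξ k ≤ a3 / dt := by
    rw [le_div_iff₀' hdt]
    exact le_trans (mul_le_mul_of_nonneg_left
      (Finset.sum_le_sum_of_subset_of_nonneg hsub (fun k _ _ => (hξ k).le)) hdt.le)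
      (ha3 n2 hn2n0)
  have hcard : (Finset.Icc n2 (n2 + n1)).card = n1 + 1 := by
    rw [Nat.card_Icc]; omega
  have hex : ∃ m ∈ Finset.Icc n2 (n2 + n1), ξ m ≤ a3 / (dt * n1) := by
    by_contra hcon
    push_neg at hcon
    have : (n1 + 1 : ℝ) * (a3 / (dt * n1)) ≤ ∑ k ∈ Finset.Icc n2 (n2 + n1), ξ k := by
      have := Finset.card_nsmul_le_sum (Finset.Icc n2 (n2+n1)) ξ (a3 / (dt * n1))
        (fun k hk => (hcon k hk).le)
      rw [hcard] at this
      simpa [nsmul_eq_mul] using this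
    have hn1R : (0:ℝ) < (n1:ℝ) := by exact_mod_cast hn1
    have h2 : ((n1:ℝ)+1) * a3 / (dt * n1) ≤ a3 / dt := by
      rw [mul_div_assoc]; exact le_trans this hsum
    have h3 : ((n1:ℝ)+1) * a3 * dt ≤ a3 * (dt * n1) := by
      rw [div_le_div_iff₀ (by positivity) hdt] at h2; linarith
    nlinarith [mul_pos ha3pos hdt]
  obtain ⟨m, hmmem, hmle⟩ := hex
  simp only [Finset.mem_Icc] at hmmem
  -- apply iteration from m
  have hit := dug_iterate dt hdt n0 ξ η ζ hξ hη hζ hsmall hrec m (by omega) (n + 1 - m)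
  have hmn : m + (n + 1 - m) = n + 1 := by omega
  rw [hmn] at hit
  -- sum bounds
  have hsub2 : Finset.Icc (m+1) (n+1) ⊆ Finset.Icc n2 (n2 + n1 + 1) :=
    Finset.Icc_subset_Icc (by omega) (by omega)
  have hζb : dt * ∑ k ∈ Finset.Icc (m+1) (n+1), ζ k ≤ a2 :=
    le_trans (mul_le_mul_of_nonneg_left
      (Finset.sum_le_sum_of_subset_of_nonneg hsub2 (fun k _ _ => (hζ k).le)) hdt.le)
      (ha2 n2 hn2n0)
  have hηb : dt * ∑ k ∈ Finset.Icc (m+1) (n+1), η k ≤ a1 :=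
    le_trans (mul_le_mul_of_nonneg_left
      (Finset.sum_le_sum_of_subset_of_nonneg hsub2 (fun k _ _ => (hη k).le)) hdt.le)
      (ha1 n2 hn2n0)
  refine le_trans hit (mul_le_mul (add_le_add hmle hζb) ?_ (Real.exp_nonneg _) ?_)
  · apply Real.exp_le_exp.mpr; linarith
  · have : 0 ≤ a3 / (dt * n1) := by positivity
    linarith
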